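/- Consequently, if P(θ) ≥ 1/(1 + c ℓ(θ,θ;2/α)) for all θ > 0 with constant c ∈ [0,1] and α > 2, then E[log₂(1+γ)] ≥ (1/ln 2) ∫₀^∞ dθ / ((1+θ)(1 + c ℓ(θ,θ;2/α))), and this lower bound is finite and strictly positive. -/

import Mathlib

open Real Set MeasureTheory ProbabilityTheory

/-- The function `ℓ(x, y; z) = x^z (πz/sin(πz) − ∫₀^{y^{−z}} dt/(1 + t^{1/z}))` from the paper. -/
noncomputable def ell (x y z : ℝ) : ℝ :=
  x ^ z * (π * z / Real.sin (π * z) - ∫ t in Set.Ioc (0:ℝ) (y ^ (-z)), (1 + t ^ (1 / z))⁻¹)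

section Aux

variable {z : ℝ}

lemma aux_K_pos (hz0 : 0 < z) (hz1 : z < 1) : 0 < π * z / Real.sin (π * z) := by
  apply div_pos (by positivity)
  apply Real.sin_pos_of_pos_of_lt_pi (by positivity)
  nlinarith [Real.pi_pos]

lemma aux_int_nonneg (a : ℝ) :
    0 ≤ ∫ t in Set.Ioc (0:ℝ) a, (1 + t ^ (1 / z))⁻¹ := by
  apply setIntegral_nonneg measurableSet_Ioc
  intro t ht
  have : (0:ℝ) ≤ t ^ (1/z) := Real.rpow_nonneg ht.1.le _
  positivity

lemma aux_int_le (a : ℝ) (ha : 0 ≤ a) :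
    (∫ t in Set.Ioc (0:ℝ) a, (1 + t ^ (1 / z))⁻¹) ≤ a := by
  have h := MeasureTheory.norm_setIntegral_le_of_norm_le_const (C := 1)
    (μ := volume) (s := Set.Ioc (0:ℝ) a) (f := fun t => (1 + t ^ (1 / z))⁻¹)
    (by simp [measure_Ioc_lt_top]) ?_
  · have hv : (volume (Set.Ioc (0:ℝ) a)).toReal = a := by
      simp [Real.volume_Ioc, ha, ENNReal.toReal_ofReal, ha]
    calc (∫ t in Set.Ioc (0:ℝ) a, (1 + t ^ (1 / z))⁻¹)
        ≤ ‖∫ t in Set.Ioc (0:ℝ) a, (1 + t ^ (1 / z))⁻¹‖ := le_abs_self _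
      _ ≤ 1 * (volume (Set.Ioc (0:ℝ) a)).toReal := h
      _ = a := by rw [one_mul, hv]
  · intro t ht
    have h1 : (0:ℝ) ≤ t ^ (1/z) := Real.rpow_nonneg ht.1.le _
    rw [Real.norm_eq_abs, abs_of_nonneg (by positivity)]
    rw [inv_le_one_iff₀]
    right; linarith

lemma aux_ell_lb (hz0 : 0 < z) {θ : ℝ} (hθ : 0 < θ) :
    π * z / Real.sin (π * z) * θ ^ z - 1 ≤ ell θ θ z := by
  have hI := aux_int_le (z := z) (θ ^ (-z)) (Real.rpow_nonneg hθ.le _)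
  have hpow : (0:ℝ) < θ ^ z := Real.rpow_pos_of_pos hθ _
  have hmul : θ ^ z * θ ^ (-z) = 1 := by
    rw [← Real.rpow_add hθ]; simp
  unfold ell
  nlinarith [hI, hpow]

lemma aux_ell_ub {θ : ℝ} (hθ : 0 < θ) :
    ell θ θ z ≤ π * z / Real.sin (π * z) * θ ^ z := by
  have hI := aux_int_nonneg (z := z) (θ ^ (-z))
  have hpow : (0:ℝ) < θ ^ z := Real.rpow_pos_of_pos hθ _
  unfold ell
  nlinarith

lemma aux_denom_lb (hz0 : 0 < z) (hz1 : z < 1) {c : ℝ} (hc0 : 0 ≤ c) (hc1 : c ≤ 1)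
    {θ : ℝ} (hθ : 0 < θ) :
    1 - c + c * (π * z / Real.sin (π * z)) * θ ^ z ≤ 1 + c * ell θ θ z := by
  have h := aux_ell_lb hz0 hθ (z := z)
  nlinarith [mul_le_mul_of_nonneg_left h hc0]

lemma aux_denom_pos (hz0 : 0 < z) (hz1 : z < 1) {c : ℝ} (hc0 : 0 ≤ c) (hc1 : c ≤ 1)
    {θ : ℝ} (hθ : 0 < θ) : 0 < 1 + c * ell θ θ z := by
  refine lt_of_lt_of_le ?_ (aux_denom_lb hz0 hz1 hc0 hc1 hθ)
  have hK := aux_K_pos hz0 hz1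
  have hpow : (0:ℝ) < θ ^ z := Real.rpow_pos_of_pos hθ _
  rcases eq_or_lt_of_le hc0 with h | h
  · simp [← h]
  · nlinarith [mul_pos (mul_pos h hK) hpow]

lemma aux_denom_ub (hz0 : 0 < z) (hz1 : z < 1) {c : ℝ} (hc0 : 0 ≤ c)
    {θ : ℝ} (hθ : 0 < θ) :
    1 + c * ell θ θ z ≤ 1 + c * (π * z / Real.sin (π * z)) * θ ^ z := by
  have h := aux_ell_ub hθ (z := z)
  nlinarith [mul_le_mul_of_nonneg_left h hc0]

lemma aux_g_integrableOn (hz0 : 0 < z) (b : ℝ) :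
    IntegrableOn (fun t : ℝ => (1 + t ^ (1 / z))⁻¹) (Set.Ioc 0 b) := by
  have hmeas : Measurable (fun t : ℝ => (1 + t ^ (1 / z))⁻¹) :=
    (measurable_const.add (measurable_id.pow measurable_const)).inv
  refine Measure.integrableOn_of_bounded (M := 1) measure_Ioc_lt_top.ne
    hmeas.aestronglyMeasurable ?_
  filter_upwards [ae_restrict_mem measurableSet_Ioc] with t ht
  have h1 : (0:ℝ) ≤ t ^ (1/z) := Real.rpow_nonneg ht.1.le _
  rw [Real.norm_eq_abs, abs_of_nonneg (by positivity)]
  rw [inv_le_one_iff₀]; right; linarith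

lemma aux_ell_measurable (hz0 : 0 < z) : Measurable (fun θ : ℝ => ell θ θ z) := by
  have hF : Monotone (fun a : ℝ => ∫ t in Set.Ioc (0:ℝ) a, (1 + t ^ (1 / z))⁻¹) := by
    intro a b hab
    apply setIntegral_mono_set (aux_g_integrableOn hz0 b)
    · filter_upwards [ae_restrict_mem measurableSet_Ioc] with t ht
      have h1 : (0:ℝ) ≤ t ^ (1/z) := Real.rpow_nonneg ht.1.le _
      positivity
    · exact HasSubset.Subset.eventuallyLE (Set.Ioc_subset_Ioc_right hab)
  have : (fun θ : ℝ => ell θ θ z) = fun θ : ℝ => θ ^ z *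
      (π * z / Real.sin (π * z) -
        (fun a : ℝ => ∫ t in Set.Ioc (0:ℝ) a, (1 + t ^ (1 / z))⁻¹) (θ ^ (-z))) := rfl
  rw [this]
  exact (measurable_id.pow measurable_const).mul
    (measurable_const.sub (hF.measurable.comp (measurable_id.pow measurable_const)))

end Aux


lemma aux_c_zero_absurd {Ω : Type*} [MeasureSpace Ω] [IsProbabilityMeasure (ℙ : Measure Ω)]
    (γ : Ω → ℝ) (hmeas : Measurable γ)
    (h1 : ∀ θ : ℝ, 0 < θ → (1 : ENNReal) ≤ ℙ {ω | θ ≤ γ ω}) : False := by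
  have hA : ∀ n : ℕ, ℙ {ω | γ ω < (n:ℝ) + 1} = 0 := by
    intro n
    have hs : MeasurableSet {ω | ((n:ℝ) + 1) ≤ γ ω} := hmeas measurableSet_Ici
    have h2 : ℙ {ω | ((n:ℝ) + 1) ≤ γ ω} = 1 :=
      le_antisymm prob_le_one (h1 _ (by positivity))
    have hset : {ω | γ ω < (n:ℝ) + 1} = {ω | ((n:ℝ) + 1) ≤ γ ω}ᶜ := by
      ext ω; simp [not_le]
    rw [hset, measure_compl hs (measure_ne_top _ _), h2, measure_univ, tsub_self]
  have huniv : (Set.univ : Set Ω) = ⋃ n : ℕ, {ω | γ ω < (n:ℝ) + 1} := by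
    ext ω
    simp only [Set.mem_univ, true_iff, Set.mem_iUnion, Set.mem_setOf_eq]
    obtain ⟨n, hn⟩ := exists_nat_gt (γ ω)
    exact ⟨n, by linarith⟩
  have hcontra : (1 : ENNReal) ≤ 0 := by
    calc (1 : ENNReal) = ℙ (Set.univ : Set Ω) := measure_univ.symm
      _ ≤ ∑' n : ℕ, ℙ {ω | γ ω < (n:ℝ) + 1} := by rw [huniv]; exact measure_iUnion_le _
      _ = 0 := by simp [hA]
  simp at hcontra

lemma aux_f_measurable {z : ℝ} (hz0 : 0 < z) (c : ℝ) :
    Measurable (fun θ : ℝ => ((1 + θ) * (1 + c * ell θ θ z))⁻¹) :=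
  ((measurable_const.add measurable_id).mul
    (measurable_const.add ((aux_ell_measurable hz0).const_mul c))).inv

lemma aux_key_bound {z : ℝ} (hz0 : 0 < z) (hz1 : z < 1) {c : ℝ} (hc : 0 < c) (hc1 : c ≤ 1)
    {θ : ℝ} (hθ : 0 < θ) :
    ‖((1 + θ) * (1 + c * ell θ θ z))⁻¹‖
      ≤ (c * (π * z / Real.sin (π * z)))⁻¹ * ((1 + θ) * θ ^ z)⁻¹ := by
  have hK := aux_K_pos hz0 hz1
  have hpow : (0:ℝ) < θ ^ z := Real.rpow_pos_of_pos hθ _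
  have hD : c * (π * z / Real.sin (π * z)) * θ ^ z ≤ 1 + c * ell θ θ z := by
    have h := aux_denom_lb hz0 hz1 hc.le hc1 hθ
    nlinarith
  have hDpos : 0 < 1 + c * ell θ θ z := aux_denom_pos hz0 hz1 hc.le hc1 hθ
  have h1θ : (0:ℝ) < 1 + θ := by linarith
  rw [Real.norm_eq_abs, abs_of_nonneg (by positivity)]
  rw [← mul_inv]
  apply inv_anti₀ (by positivity)
  calc c * (π * z / Real.sin (π * z)) * ((1 + θ) * θ ^ z)
      = (1 + θ) * (c * (π * z / Real.sin (π * z)) * θ ^ z) := by ring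
    _ ≤ (1 + θ) * (1 + c * ell θ θ z) := mul_le_mul_of_nonneg_left hD h1θ.le

lemma aux_integrable {z : ℝ} (hz0 : 0 < z) (hz1 : z < 1) {c : ℝ} (hc : 0 < c) (hc1 : c ≤ 1) :
    IntegrableOn (fun θ : ℝ => ((1 + θ) * (1 + c * ell θ θ z))⁻¹) (Set.Ioi 0) := by
  have hK := aux_K_pos hz0 hz1
  have hcK : (0:ℝ) < c * (π * z / Real.sin (π * z)) := by positivity
  have hfm := aux_f_measurable hz0 c
  rw [← Set.Ioc_union_Ioi_eq_Ioi (zero_le_one' ℝ)]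
  apply IntegrableOn.union
  · -- on (0, 1]
    have hdom : IntegrableOn
        (fun θ : ℝ => (c * (π * z / Real.sin (π * z)))⁻¹ * θ ^ (-z)) (Set.Ioc 0 1) := by
      have h := intervalIntegral.intervalIntegrable_rpow' (a := (0:ℝ)) (b := (1:ℝ)) (r := -z) (by linarith)
      rw [intervalIntegrable_iff, Set.uIoc_of_le (zero_le_one' ℝ)] at h
      exact h.const_mul _
    refine Integrable.mono hdom hfm.aestronglyMeasurable ?_
    filter_upwards [ae_restrict_mem measurableSet_Ioc] with θ hθ
    have hpow : (0:ℝ) < θ ^ z := Real.rpow_pos_of_pos hθ.1 _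
    have h2 : ((1 + θ) * θ ^ z)⁻¹ ≤ θ ^ (-z) := by
      rw [Real.rpow_neg hθ.1.le]
      apply inv_anti₀ (by positivity)
      nlinarith [mul_pos hθ.1 hpow]
    calc ‖((1 + θ) * (1 + c * ell θ θ z))⁻¹‖
        ≤ (c * (π * z / Real.sin (π * z)))⁻¹ * ((1 + θ) * θ ^ z)⁻¹ :=
          aux_key_bound hz0 hz1 hc hc1 hθ.1
      _ ≤ (c * (π * z / Real.sin (π * z)))⁻¹ * θ ^ (-z) := by
          exact mul_le_mul_of_nonneg_left h2 (by positivity)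
      _ ≤ ‖(c * (π * z / Real.sin (π * z)))⁻¹ * θ ^ (-z)‖ := le_abs_self _
  · -- on (1, ∞)
    have hdom : IntegrableOn
        (fun θ : ℝ => (c * (π * z / Real.sin (π * z)))⁻¹ * θ ^ (-(1 + z))) (Set.Ioi 1) := by
      have h := (integrableOn_Ioi_rpow_iff (zero_lt_one' ℝ)).2
        (show -(1 + z) < -1 by linarith)
      exact h.const_mul _
    refine Integrable.mono hdom hfm.aestronglyMeasurable ?_
    filter_upwards [ae_restrict_mem measurableSet_Ioi] with θ hθ
    have hθ1 : (1:ℝ) < θ := hθ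
    have hθ0 : (0:ℝ) < θ := by linarith
    have hpow : (0:ℝ) < θ ^ z := Real.rpow_pos_of_pos hθ0 _
    have h2 : ((1 + θ) * θ ^ z)⁻¹ ≤ θ ^ (-(1 + z)) := by
      rw [Real.rpow_neg hθ0.le, Real.rpow_add hθ0, Real.rpow_one]
      apply inv_anti₀ (by positivity)
      nlinarith [hpow]
    calc ‖((1 + θ) * (1 + c * ell θ θ z))⁻¹‖
        ≤ (c * (π * z / Real.sin (π * z)))⁻¹ * ((1 + θ) * θ ^ z)⁻¹ :=
          aux_key_bound hz0 hz1 hc hc1 hθ0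
      _ ≤ (c * (π * z / Real.sin (π * z)))⁻¹ * θ ^ (-(1 + z)) := by
          exact mul_le_mul_of_nonneg_left h2 (by positivity)
      _ ≤ ‖(c * (π * z / Real.sin (π * z)))⁻¹ * θ ^ (-(1 + z))‖ := le_abs_self _

/-- One-dimensional change of variables for the Lebesgue integral. -/
lemma aux_lintegral_image {s : Set ℝ} {f f' : ℝ → ℝ} (hs : MeasurableSet s)
    (hf' : ∀ x ∈ s, HasDerivWithinAt f (f' x) s x) (hf : Set.InjOn f s) (g : ℝ → ENNReal) :
    ∫⁻ x in f '' s, g x = ∫⁻ x in s, ENNReal.ofReal |f' x| * g (f x) := by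
  simpa only [ContinuousLinearMap.det_toSpanSingleton] using
    lintegral_image_eq_lintegral_abs_det_fderiv_mul volume hs
      (fun x hx => (hf' x hx).hasFDerivWithinAt) hf g

/-- If the survival function of `γ` satisfies `P(θ) ≥ 1/(1 + c ℓ(θ,θ;2/α))` for all `θ > 0`
with `c ∈ [0,1]` and `α > 2`, then
`E[log₂(1+γ)] ≥ (1/ln 2) ∫₀^∞ dθ/((1+θ)(1 + c ℓ(θ,θ;2/α)))`, and this lower bound is
finite (the integrand is integrable on `(0,∞)`) and strictly positive. -/
theorem stmt15 {Ω : Type*} [MeasureSpace Ω] [IsProbabilityMeasure (ℙ : Measure Ω)]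
    (γ : Ω → ℝ) (hmeas : Measurable γ) (hγ : ∀ ω, 0 ≤ γ ω)
    (α c : ℝ) (hα : 2 < α) (hc0 : 0 ≤ c) (hc1 : c ≤ 1)
    (hP : ∀ θ : ℝ, 0 < θ →
      ENNReal.ofReal ((1 + c * ell θ θ (2 / α))⁻¹) ≤ ℙ {ω | θ ≤ γ ω}) :
    IntegrableOn (fun θ : ℝ => ((1 + θ) * (1 + c * ell θ θ (2 / α)))⁻¹) (Set.Ioi 0) ∧
    0 < (1 / Real.log 2) *
        ∫ θ in Set.Ioi (0:ℝ), ((1 + θ) * (1 + c * ell θ θ (2 / α)))⁻¹ ∧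
    ENNReal.ofReal ((1 / Real.log 2) *
        ∫ θ in Set.Ioi (0:ℝ), ((1 + θ) * (1 + c * ell θ θ (2 / α)))⁻¹)
      ≤ ∫⁻ ω, ENNReal.ofReal (Real.logb 2 (1 + γ ω)) ∂ℙ := by
  set z : ℝ := 2 / α with hzdef
  have hα0 : (0:ℝ) < α := by linarith
  have hz0 : 0 < z := by positivity
  have hz1 : z < 1 := by
    rw [hzdef, div_lt_one hα0]; linarith
  rcases eq_or_lt_of_le hc0 with hc | hc
  · -- c = 0 : the hypothesis hP is contradictory
    exfalso
    apply aux_c_zero_absurd γ hmeas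
    intro θ hθ
    have h := hP θ hθ
    rw [← hc] at h
    simpa using h
  · -- c > 0
    have hint := aux_integrable hz0 hz1 hc hc1
    have hlog2 : (0:ℝ) < Real.log 2 := Real.log_pos one_lt_two
    have hfpos : ∀ θ ∈ Set.Ioi (0:ℝ), 0 < ((1 + θ) * (1 + c * ell θ θ z))⁻¹ := by
      intro θ hθ
      have hθ0 : (0:ℝ) < θ := hθ
      exact inv_pos.2 (mul_pos (by linarith) (aux_denom_pos hz0 hz1 hc0 hc1 hθ0))
    have hIpos : 0 < ∫ θ in Set.Ioi (0:ℝ), ((1 + θ) * (1 + c * ell θ θ z))⁻¹ := by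
      rw [setIntegral_pos_iff_support_of_nonneg_ae ?_ hint]
      · refine lt_of_lt_of_le ?_ (measure_mono (fun θ hθ =>
          (⟨ne_of_gt (hfpos θ hθ), hθ⟩ :
            θ ∈ Function.support (fun θ : ℝ => ((1 + θ) * (1 + c * ell θ θ z))⁻¹) ∩ Set.Ioi 0)))
        simp [Real.volume_Ioi]
      · filter_upwards [ae_restrict_mem measurableSet_Ioi] with θ hθ
        exact (hfpos θ hθ).le
    refine ⟨hint, mul_pos (by positivity) hIpos, ?_⟩
    -- Change of variables and layer-cake
    set φ : ℝ → ℝ := fun t => (2:ℝ) ^ t - 1 with hφdef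
    have h2t : ∀ t : ℝ, (0:ℝ) < (2:ℝ) ^ t := fun t => Real.rpow_pos_of_pos two_pos t
    have hφd : ∀ t ∈ Set.Ioi (0:ℝ),
        HasDerivWithinAt φ ((2:ℝ) ^ t * Real.log 2) (Set.Ioi 0) t := fun t _ =>
      (((Real.hasStrictDerivAt_const_rpow two_pos t).hasDerivAt).sub_const 1).hasDerivWithinAt
    have hφmono : StrictMono φ := by
      intro a b hab
      have := (Real.rpow_lt_rpow_left_iff (x := 2) one_lt_two).2 hab
      simp only [hφdef]
      linarith
    have hφpos : ∀ t : ℝ, 0 < t → 0 < φ t := by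
      intro t ht
      have h := (Real.rpow_lt_rpow_left_iff (x := 2) one_lt_two).2 ht
      rw [Real.rpow_zero] at h
      simp only [hφdef]; linarith
    have himg : φ '' Set.Ioi 0 = Set.Ioi 0 := by
      apply Set.eq_of_subset_of_subset
      · rintro x ⟨t, ht, rfl⟩
        exact hφpos t ht
      · intro x hx
        have hx0 : (0:ℝ) < x := hx
        refine ⟨Real.logb 2 (1 + x), Real.logb_pos one_lt_two (by linarith), ?_⟩
        simp only [hφdef]
        rw [Real.rpow_logb two_pos (by norm_num) (by linarith)]
        ring
    -- layer cake
    have hlogmeas : Measurable fun ω => Real.logb 2 (1 + γ ω) := by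
      simp only [Real.logb]
      exact (Real.measurable_log.comp (measurable_const.add hmeas)).div_const _
    have hlayer : ∫⁻ ω, ENNReal.ofReal (Real.logb 2 (1 + γ ω)) ∂ℙ
        = ∫⁻ t in Set.Ioi (0:ℝ), ℙ {ω | t ≤ Real.logb 2 (1 + γ ω)} :=
      lintegral_eq_lintegral_meas_le ℙ
        (Filter.Eventually.of_forall fun ω => Real.logb_nonneg one_lt_two (by linarith [hγ ω]))
        hlogmeas.aemeasurable
    set g : ℝ → ENNReal := fun θ =>
      ENNReal.ofReal ((1 / Real.log 2) * ((1 + θ) * (1 + c * ell θ θ z))⁻¹) with hgdef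
    have step1 : ENNReal.ofReal ((1 / Real.log 2) *
          ∫ θ in Set.Ioi (0:ℝ), ((1 + θ) * (1 + c * ell θ θ z))⁻¹)
        = ∫⁻ θ in Set.Ioi (0:ℝ), g θ := by
      rw [ENNReal.ofReal_mul (by positivity)]
      rw [ofReal_integral_eq_lintegral_ofReal hint
        (by filter_upwards [ae_restrict_mem measurableSet_Ioi] with θ hθ using (hfpos θ hθ).le)]
      rw [← lintegral_const_mul' _ _ ENNReal.ofReal_ne_top]
      simp_rw [hgdef, ← ENNReal.ofReal_mul (show (0:ℝ) ≤ 1 / Real.log 2 by positivity)]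
    have step2 : ∫⁻ θ in Set.Ioi (0:ℝ), g θ
        = ∫⁻ t in Set.Ioi (0:ℝ), ENNReal.ofReal |(2:ℝ) ^ t * Real.log 2| * g (φ t) := by
      conv_lhs => rw [← himg]
      rw [aux_lintegral_image measurableSet_Ioi hφd (hφmono.injective.injOn) g]
    have step3 : ∀ t ∈ Set.Ioi (0:ℝ),
        ENNReal.ofReal |(2:ℝ) ^ t * Real.log 2| * g (φ t)
          ≤ ℙ {ω | t ≤ Real.logb 2 (1 + γ ω)} := by
      intro t ht
      have ht0 : (0:ℝ) < t := ht
      have hθ : 0 < φ t := hφpos t ht0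
      have h1θ : 1 + φ t = (2:ℝ) ^ t := by simp only [hφdef]; ring
      have hD : 0 < 1 + c * ell (φ t) (φ t) z := aux_denom_pos hz0 hz1 hc0 hc1 hθ
      have habs : |(2:ℝ) ^ t * Real.log 2| = (2:ℝ) ^ t * Real.log 2 :=
        abs_of_pos (mul_pos (h2t t) hlog2)
      have hset : {ω | φ t ≤ γ ω} = {ω | t ≤ Real.logb 2 (1 + γ ω)} := by
        ext ω
        simp only [Set.mem_setOf_eq]
        rw [Real.le_logb_iff_rpow_le one_lt_two (by linarith [hγ ω])]
        constructor <;> intro h <;> linarith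
      have hcalc : ENNReal.ofReal |(2:ℝ) ^ t * Real.log 2| * g (φ t)
          = ENNReal.ofReal ((1 + c * ell (φ t) (φ t) z)⁻¹) := by
        rw [habs, hgdef]
        rw [← ENNReal.ofReal_mul (by positivity)]
        congr 1
        rw [h1θ, mul_inv]
        field_simp
      rw [hcalc, ← hset]
      exact hP (φ t) hθ
    calc ENNReal.ofReal ((1 / Real.log 2) *
            ∫ θ in Set.Ioi (0:ℝ), ((1 + θ) * (1 + c * ell θ θ z))⁻¹)
        = ∫⁻ t in Set.Ioi (0:ℝ), ENNReal.ofReal |(2:ℝ) ^ t * Real.log 2| * g (φ t) := by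
          rw [step1, step2]
      _ ≤ ∫⁻ t in Set.Ioi (0:ℝ), ℙ {ω | t ≤ Real.logb 2 (1 + γ ω)} := by
          apply lintegral_mono_ae
          filter_upwards [ae_restrict_mem measurableSet_Ioi] with t ht
          exact step3 t ht
      _ = ∫⁻ ω, ENNReal.ofReal (Real.logb 2 (1 + γ ω)) ∂ℙ := hlayer.symm
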